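/- Let r ≥ 1, let B = B_1 × ⋯ × B_r be an r-grid, and let X ⊆ B be a basic set. Then there exist a linearly ordered set (S, <), a coordinate-wise monotone function f^r : B_1 × ⋯ × B_{r-1} → S and a function f_r : B_r → S such that X = {(b^r, b_r) ∈ (B_1 × ⋯ × B_{r-1}) × B_r : f^r(b^r) < f_r(b_r)}. -/

import Mathlib

/-- A function `f` from an `r`-grid `∀ i, B i` to a linearly ordered set `S` is
coordinate-wise monotone if for every coordinate `i`, all `a, a'` in the remaining
coordinates and all `b, b'` in the `i`-th coordinate:
`f(a ⊕_i b) ≤ f(a ⊕_i b') ↔ f(a' ⊕_i b) ≤ f(a' ⊕_i b')`. -/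
def CoordWiseMonotone {r : ℕ} {B : Fin r → Type} {S : Type} [LinearOrder S]
    (f : (∀ i, B i) → S) : Prop :=
  ∀ (i : Fin r) (x x' : ∀ j, B j) (b b' : B i),
    (f (Function.update x i b) ≤ f (Function.update x i b') ↔
      f (Function.update x' i b) ≤ f (Function.update x' i b'))

/-- A subset `X` of the grid `∀ i, B i` is basic if `X = {x | f x < l}` for some
coordinate-wise monotone function `f` into a linearly ordered set `S` and some `l ∈ S`. -/
def IsBasicSet {r : ℕ} {B : Fin r → Type} (X : Set (∀ i, B i)) : Prop :=
  ∃ (S : Type) (_ : LinearOrder S) (f : (∀ i, B i) → S) (l : S),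
    CoordWiseMonotone f ∧ X = {x | f x < l}

/-- The type of down-closed sets of `C`, with respect to the linear preorder pulled back
along `g : C → S`. -/
def DownSets {C S : Type} [LinearOrder S] (g : C → S) : Type :=
  {D : Set C // ∀ ⦃c c'⦄, g c ≤ g c' → c' ∈ D → c ∈ D}

noncomputable instance DownSets.instLinearOrder {C S : Type} [LinearOrder S] (g : C → S) :
    LinearOrder (DownSets g) where
  le D E := D.1 ⊆ E.1
  le_refl D := subset_rfl
  le_trans _ _ _ := Set.Subset.trans
  le_antisymm D E h h' := Subtype.ext (Set.Subset.antisymm h h')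
  le_total D E := by
    by_cases h : D.1 ⊆ E.1
    · exact Or.inl h
    · refine Or.inr ?_
      rw [Set.not_subset] at h
      obtain ⟨d, hdD, hdE⟩ := h
      intro e he
      rcases le_total (g e) (g d) with h' | h'
      · exact D.2 h' hdD
      · exact absurd (E.2 h' he) hdE
  toDecidableLE := fun _ _ => Classical.dec _

theorem DownSets.le_def {C S : Type} [LinearOrder S] {g : C → S} {D E : DownSets g} :
    D ≤ E ↔ D.1 ⊆ E.1 := Iff.rfl

theorem DownSets.lt_def {C S : Type} [LinearOrder S] {g : C → S} {D E : DownSets g} :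
    D < E ↔ D.1 ⊆ E.1 ∧ ¬ E.1 ⊆ D.1 := lt_iff_le_not_ge

/-- Coordinate-splitting presentation of a basic set: for any `r = m + 1 ≥ 1` and any
basic subset `X` of the grid `B₁ × ⋯ × B_r`, there are a linearly ordered set `S`,
a coordinate-wise monotone `f^r : B₁ × ⋯ × B_{r-1} → S` and `f_r : B_r → S` with
`X = {(b^r, b_r) : f^r(b^r) < f_r(b_r)}`. -/
theorem coordinate_splitting_of_basic {m : ℕ} {B : Fin (m + 1) → Type}
    (X : Set (∀ i, B i)) (hX : IsBasicSet X) :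
    ∃ (S : Type) (_ : LinearOrder S)
      (fr : (∀ i : Fin m, B i.castSucc) → S) (flast : B (Fin.last m) → S),
      CoordWiseMonotone fr ∧
      X = {x | fr (fun i => x i.castSucc) < flast (x (Fin.last m))} := by
  obtain ⟨S, _inst, f, l, hf, hXeq⟩ := hX
  by_cases hne : Nonempty (∀ i, B i)
  · obtain ⟨x₀⟩ := hne
    set a₀ : ∀ i : Fin m, B i.castSucc := fun i => x₀ i.castSucc with ha₀
    set c₀ : B (Fin.last m) := x₀ (Fin.last m) with hc₀
    set F : (∀ i : Fin m, B i.castSucc) → B (Fin.last m) → S :=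
      fun a c => f (Fin.snoc a c) with hF
    -- comparisons along the last coordinate are uniform
    have L1 : ∀ a a' c c', (F a c ≤ F a c' ↔ F a' c ≤ F a' c') := by
      intro a a' c c'
      simpa [hF, Fin.update_snoc_last] using
        hf (Fin.last m) (Fin.snoc a c₀) (Fin.snoc a' c₀) c c'
    set g : B (Fin.last m) → S := F a₀ with hg
    -- the downset of values below the threshold
    set Down : (∀ i : Fin m, B i.castSucc) → DownSets g :=
      fun a => ⟨{c | F a c < l}, fun c c' h h' =>
        lt_of_le_of_lt ((L1 a₀ a c c').mp h) h'⟩ with hDown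
    set E : B (Fin.last m) → DownSets g :=
      fun b => ⟨{c | g c < g b}, fun c c' h h' => lt_of_le_of_lt h h'⟩ with hE
    refine ⟨(DownSets g)ᵒᵈ ×ₗ WithBot S, inferInstance,
      fun a => toLex (OrderDual.toDual (Down a), (F a c₀ : WithBot S)),
      fun b => toLex (OrderDual.toDual (E b), (⊥ : WithBot S)), ?_, ?_⟩
    · -- coordinate-wise monotonicity
      intro i a a' b b'
      have transfer : ∀ (a a' : ∀ i : Fin m, B i.castSucc) (c c' : B (Fin.last m)),
          (F (Function.update a i b) c ≤ F (Function.update a i b') c ↔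
           F (Function.update a' i b) c' ≤ F (Function.update a' i b') c') := by
        intro a a' c c'
        simpa [hF, Fin.snoc_update] using
          hf i.castSucc (Fin.snoc a c) (Fin.snoc a' c') b b'
      rcases le_or_gt (F (Function.update a₀ i b) c₀) (F (Function.update a₀ i b') c₀)
        with hP | hP
      · have hall : ∀ a c, F (Function.update a i b) c ≤ F (Function.update a i b') c :=
          fun a c => (transfer a a₀ c c₀).mpr hP
        suffices hs : ∀ a, toLex (OrderDual.toDual (Down (Function.update a i b)),
            (F (Function.update a i b) c₀ : WithBot S)) ≤
            toLex (OrderDual.toDual (Down (Function.update a i b')),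
            (F (Function.update a i b') c₀ : WithBot S)) from iff_of_true (hs a) (hs a')
        intro a
        have hsub : Down (Function.update a i b') ≤ Down (Function.update a i b) := by
          intro c hc
          exact lt_of_le_of_lt (hall a c) hc
        rw [Prod.Lex.le_iff]
        rcases eq_or_lt_of_le hsub with heq | hlt
        · exact Or.inr ⟨congrArg OrderDual.toDual heq.symm, WithBot.coe_le_coe.mpr (hall a c₀)⟩
        · exact Or.inl hlt
      · have hall : ∀ a c, F (Function.update a i b') c < F (Function.update a i b) c := by
          intro a c
          refine lt_of_not_ge fun h => absurd ((transfer a a₀ c c₀).mp h) (not_le.mpr hP)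
        suffices hs : ∀ a, toLex (OrderDual.toDual (Down (Function.update a i b')),
            (F (Function.update a i b') c₀ : WithBot S)) <
            toLex (OrderDual.toDual (Down (Function.update a i b)),
            (F (Function.update a i b) c₀ : WithBot S)) from
          iff_of_false (not_le.mpr (hs a)) (not_le.mpr (hs a'))
        intro a
        have hsub : Down (Function.update a i b) ≤ Down (Function.update a i b') := by
          intro c hc
          exact lt_trans (hall a c) hc
        rw [Prod.Lex.lt_iff]
        rcases eq_or_lt_of_le hsub with heq | hlt
        · exact Or.inr ⟨congrArg OrderDual.toDual heq.symm, WithBot.coe_lt_coe.mpr (hall a c₀)⟩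
        · exact Or.inl hlt
    · -- the set equality
      rw [hXeq]
      ext x
      simp only [Set.mem_setOf_eq]
      have hx : Fin.snoc (fun i => x i.castSucc) (x (Fin.last m)) = x := Fin.snoc_init_self x
      have key : ∀ a b, (toLex (OrderDual.toDual (Down a), (F a c₀ : WithBot S)) <
          toLex (OrderDual.toDual (E b), (⊥ : WithBot S)) ↔ F a b < l) := by
        intro a b
        rw [Prod.Lex.lt_iff]
        constructor
        · rintro (h | ⟨-, h⟩)
          · simp only [ofLex_toLex] at h
            rw [OrderDual.toDual_lt_toDual, DownSets.lt_def] at h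
            obtain ⟨hle, hnle⟩ := h
            rw [Set.not_subset] at hnle
            obtain ⟨d, hdD, hdE⟩ := hnle
            have : g b ≤ g d := le_of_not_gt hdE
            exact lt_of_le_of_lt ((L1 a₀ a b d).mp this) hdD
          · exact absurd h (not_lt_bot)
        · intro h
          refine Or.inl ?_
          simp only [ofLex_toLex]
          rw [OrderDual.toDual_lt_toDual, DownSets.lt_def]
          constructor
          · intro c hc
            exact lt_of_le_of_lt ((L1 a₀ a c b).mp (le_of_lt hc)) h
          · rw [Set.not_subset]
            exact ⟨b, h, lt_irrefl (g b)⟩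
      rw [key]
      show f x < l ↔ _
      rw [hF]
      simp only [hx]
  · refine ⟨Bool, inferInstance, fun _ => false, fun _ => false, ?_, ?_⟩
    · intro i x x' b b'
      exact Iff.rfl
    · ext x
      exact absurd ⟨x⟩ hne
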